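/- For θ ∈ (0,π) and β ∈ [0,π), the generalized angle function φ^g(ρ, β, θ) := f_θ(iβ − ρ) − f_θ(iβ + ρ) (with f_θ analytically continued) satisfies, for ρ < 0 and β > 0, ∂φ^g/∂β = −sin θ · sinh ρ · sin β / |cosh(ρ + iβ) − cos θ|² > 0, and ∂φ^g/∂β = 0 when β = 0. -/

import Mathlib

open Real Complex

lemma key_alg (s A B : ℝ) (h1 : (A:ℂ) - (B:ℂ)*Complex.I ≠ 0)
    (h2 : (A:ℂ) + (B:ℂ)*Complex.I ≠ 0) (hd : A^2 + B^2 ≠ 0) :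
    Complex.I * ((s:ℂ) / (2*((A:ℂ) - (B:ℂ)*Complex.I)))
      - Complex.I * ((s:ℂ)/(2*((A:ℂ)+(B:ℂ)*Complex.I)))
      = ((-s*B/(A^2+B^2) : ℝ) : ℂ) := by
  have hd' : ((A:ℂ)^2 + (B:ℂ)^2) ≠ 0 := by
    intro h; apply hd; exact_mod_cast h
  have key : ∀ X Y : ℂ, X ≠ 0 → Y ≠ 0 →
      Complex.I*((s:ℂ)/(2*X)) - Complex.I*((s:ℂ)/(2*Y)) = Complex.I*s*(Y-X)/(2*(X*Y)) := by
    intro X Y hX hY; field_simp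
  have e : (A:ℂ)^2+(B:ℂ)^2 = ((A:ℂ) - B*Complex.I)*((A:ℂ)+B*Complex.I) := by
    ring_nf; rw [Complex.I_sq]; ring
  push_cast
  rw [key _ _ h1 h2, e,
    div_eq_div_iff (mul_ne_zero two_ne_zero (mul_ne_zero h1 h2)) (mul_ne_zero h1 h2)]
  ring_nf
  simp only [Complex.I_sq, Complex.I_pow_four]
  ring

lemma myre_aux {f : ℝ → ℂ} {d : ℂ} {x : ℝ} (h : HasDerivAt f d x) :
    HasDerivAt (fun b => (f b).re) d.re x := by
  have := Complex.reCLM.hasFDerivAt.comp x h.hasFDerivAt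
  exact Complex.reCLM.hasFDerivAt.comp_hasDerivAt x h

/-- Let `θ ∈ (0,π)` and let `F` be the analytic continuation of `f_θ`
to the strip `{x+iy : y ∈ (−π,π)}` minus the imaginary segments (so off `re z = 0`),
characterized by `F'(z) = sin θ/(2(cosh z − cos θ))` there.  The generalized angle
`φ^g(ρ, β, θ) = f_θ(iβ − ρ) − f_θ(iβ + ρ)` satisfies, for `ρ < 0` and `β ∈ [0,π)`,
`∂φ^g/∂β = −sin θ · sinh ρ · sin β / |cosh(ρ + iβ) − cos θ|²`, which is `> 0` for `β > 0`
and `= 0` for `β = 0`. -/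
theorem generalized_angle_beta_derivative
    (θ : ℝ) (hθ : θ ∈ Set.Ioo 0 Real.pi) (F : ℂ → ℂ)
    (hF : ∀ z : ℂ, z.re ≠ 0 → -Real.pi < z.im → z.im < Real.pi →
      HasDerivAt F (Complex.sin (θ : ℂ) / (2 * (Complex.cosh z - Complex.cos (θ : ℂ)))) z) :
    ∀ ρ β : ℝ, ρ < 0 → 0 ≤ β → β < Real.pi →
      (HasDerivAt (fun b : ℝ => (F (Complex.I * (b : ℂ) - (ρ : ℂ))
            - F (Complex.I * (b : ℂ) + (ρ : ℂ))).re)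
        (-(Real.sin θ) * Real.sinh ρ * Real.sin β /
          (‖Complex.cosh ((ρ : ℂ) + Complex.I * (β : ℂ)) - Complex.cos (θ : ℂ)‖)^2)
        β) ∧
      (0 < β → 0 < -(Real.sin θ) * Real.sinh ρ * Real.sin β /
          (‖Complex.cosh ((ρ : ℂ) + Complex.I * (β : ℂ)) - Complex.cos (θ : ℂ)‖)^2) ∧
      (β = 0 → -(Real.sin θ) * Real.sinh ρ * Real.sin β /
          (‖Complex.cosh ((ρ : ℂ) + Complex.I * (β : ℂ)) - Complex.cos (θ : ℂ)‖)^2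
          = 0) := by
  intro ρ β hρ hβ0 hβπ
  have hsinθ : 0 < Real.sin θ := Real.sin_pos_of_pos_of_lt_pi hθ.1 hθ.2
  have hsinhρ : Real.sinh ρ < 0 := by
    have := Real.sinh_lt_sinh.mpr hρ
    simpa [Real.sinh_zero] using this
  set a : ℝ := Real.cosh ρ * Real.cos β - Real.cos θ with ha
  set b0 : ℝ := Real.sinh ρ * Real.sin β with hb0
  -- the two relevant values of cosh
  have hA1 : Complex.cosh ((ρ:ℂ) + Complex.I*(β:ℂ)) - Complex.cos (θ:ℂ)
      = (a:ℂ) + (b0:ℂ)*Complex.I := by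
    rw [Complex.cosh_add, mul_comm Complex.I, Complex.cosh_mul_I, Complex.sinh_mul_I,
      ← Complex.ofReal_cosh, ← Complex.ofReal_sinh, ← Complex.ofReal_cos, ← Complex.ofReal_sin,
      ← Complex.ofReal_cos θ]
    push_cast [ha, hb0]
    ring
  have hA2 : Complex.cosh (Complex.I*(β:ℂ) - (ρ:ℂ)) - Complex.cos (θ:ℂ)
      = (a:ℂ) - (b0:ℂ)*Complex.I := by
    have : Complex.I*(β:ℂ) - (ρ:ℂ) = -((ρ:ℂ) - Complex.I*(β:ℂ)) := by ring
    rw [this, Complex.cosh_neg, Complex.cosh_sub, mul_comm Complex.I, Complex.cosh_mul_I,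
      Complex.sinh_mul_I, ← Complex.ofReal_cosh, ← Complex.ofReal_sinh, ← Complex.ofReal_cos,
      ← Complex.ofReal_sin, ← Complex.ofReal_cos θ]
    push_cast [ha, hb0]
    ring
  have hA1' : Complex.cosh (Complex.I*(β:ℂ) + (ρ:ℂ)) - Complex.cos (θ:ℂ)
      = (a:ℂ) + (b0:ℂ)*Complex.I := by rw [add_comm]; exact hA1
  -- positivity of the denominator
  have hpos : 0 < a^2 + b0^2 := by
    rcases eq_or_lt_of_le hβ0 with h0 | h0
    · have hcosh : 1 < Real.cosh ρ := Real.one_lt_cosh.mpr (ne_of_lt hρ)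
      have hcos : Real.cos θ ≤ 1 := Real.cos_le_one θ
      have : 0 < a := by
        rw [ha, ← h0]
        simp only [Real.cos_zero, mul_one]
        linarith
      positivity
    · have hsinβ : 0 < Real.sin β := Real.sin_pos_of_pos_of_lt_pi h0 hβπ
      have : b0 ≠ 0 := by
        rw [hb0]; exact ne_of_lt (mul_neg_of_neg_of_pos hsinhρ hsinβ)
      positivity
  have hz2 : (a:ℂ) + (b0:ℂ)*Complex.I ≠ 0 := by
    intro h
    have := congrArg Complex.normSq h
    simp [Complex.normSq_apply] at this
    nlinarith
  have hz1 : (a:ℂ) - (b0:ℂ)*Complex.I ≠ 0 := by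
    intro h
    have := congrArg Complex.normSq h
    simp [Complex.normSq_apply] at this
    nlinarith
  -- abs squared
  have habs : (‖Complex.cosh ((ρ:ℂ) + Complex.I*(β:ℂ)) - Complex.cos (θ:ℂ)‖)^2
      = a^2 + b0^2 := by
    rw [hA1, Complex.sq_norm]
    simp [Complex.normSq_apply]
    ring
  refine ⟨?_, ?_, ?_⟩
  · -- the derivative
    have inner_b : HasDerivAt (fun b:ℝ => ((b:ℝ):ℂ)) 1 β := by
      simpa using (hasDerivAt_id β).ofReal_comp
    have inner1 : HasDerivAt (fun b:ℝ => Complex.I*(b:ℂ) - (ρ:ℂ)) Complex.I β := by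
      simpa using (inner_b.const_mul Complex.I).sub_const (ρ:ℂ)
    have inner2 : HasDerivAt (fun b:ℝ => Complex.I*(b:ℂ) + (ρ:ℂ)) Complex.I β := by
      simpa using (inner_b.const_mul Complex.I).add_const (ρ:ℂ)
    have hz1re : (Complex.I*(β:ℂ) - (ρ:ℂ)).re ≠ 0 := by
      simp only [Complex.sub_re, Complex.mul_re, Complex.I_re, Complex.I_im, Complex.ofReal_re,
        Complex.ofReal_im]
      intro h; nlinarith
    have hz2re : (Complex.I*(β:ℂ) + (ρ:ℂ)).re ≠ 0 := by
      simp only [Complex.add_re, Complex.mul_re, Complex.I_re, Complex.I_im, Complex.ofReal_re,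
        Complex.ofReal_im]
      intro h; nlinarith
    have him1 : (Complex.I*(β:ℂ) - (ρ:ℂ)).im = β := by simp
    have him2 : (Complex.I*(β:ℂ) + (ρ:ℂ)).im = β := by simp
    have hπ : (0:ℝ) < Real.pi := Real.pi_pos
    have hd1 := hF (Complex.I*(β:ℂ) - (ρ:ℂ)) hz1re (by rw [him1]; linarith) (by rw [him1]; linarith)
    have hd2 := hF (Complex.I*(β:ℂ) + (ρ:ℂ)) hz2re (by rw [him2]; linarith) (by rw [him2]; linarith)
    have H1 := HasDerivAt.scomp β hd1 inner1
    have H2 := HasDerivAt.scomp β hd2 inner2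
    have H := H1.sub H2
    have key : Complex.I • (Complex.sin (θ:ℂ) /
          (2 * (Complex.cosh (Complex.I*(β:ℂ) - (ρ:ℂ)) - Complex.cos (θ:ℂ))))
        - Complex.I • (Complex.sin (θ:ℂ) /
          (2 * (Complex.cosh (Complex.I*(β:ℂ) + (ρ:ℂ)) - Complex.cos (θ:ℂ))))
        = ((-(Real.sin θ) * Real.sinh ρ * Real.sin β / (a^2 + b0^2) : ℝ) : ℂ) := by
      have hfrac : -(Real.sin θ) * Real.sinh ρ * Real.sin β / (a^2 + b0^2)
          = -(Real.sin θ) * b0 / (a^2 + b0^2) := by rw [hb0]; ring_nf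
      rw [smul_eq_mul, smul_eq_mul, hA2, hA1', ← Complex.ofReal_sin θ, hfrac]
      exact key_alg (Real.sin θ) a b0 hz1 hz2 (ne_of_gt hpos)
    have Hre := myre_aux H
    rw [key] at Hre
    rw [Complex.ofReal_re] at Hre
    rw [habs]
    exact Hre
  · intro hβpos
    rw [habs]
    have hsinβ : 0 < Real.sin β := Real.sin_pos_of_pos_of_lt_pi hβpos hβπ
    apply div_pos _ hpos
    have h1 : 0 < -Real.sin θ * Real.sinh ρ := mul_pos_of_neg_of_neg (by linarith) hsinhρ
    exact mul_pos h1 hsinβ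
  · intro h
    subst h
    simp
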